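/- Let C ⊆ F_2^n be a neural code and D = ^cC. Then MaxMot(^c(C^[p])) = {\overline{\overline{b}^p} : b ∈ MaxMot(D)}, and this set is contained in MaxMot(^c(C^p)). -/

import Mathlib

open MvPolynomial

/-- The field with two elements. -/
abbrev F2 := ZMod 2

/-- A motif indexed by `ι`: at each index it is `0`, `1`, or `*` (represented by `none`). -/
abbrev Motif (ι : Type*) := ι → Option F2

/-- The partial order on motifs: `a ≤ b` iff `a i = b i` for every index `i` with `b i ≠ *`. -/
def MotifLE {ι : Type*} (a b : Motif ι) : Prop :=
  ∀ (i : ι) (x : F2), b i = some x → a i = some x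

/-- The variety of a motif: all words agreeing with the motif on its non-`*` coordinates. -/
def variety {ι : Type*} (a : Motif ι) : Set (ι → F2) :=
  {w | ∀ (i : ι) (x : F2), a i = some x → w i = x}

/-- `a` is a motif of the code `C` iff its variety is contained in `C`. -/
def IsMotifOf {ι : Type*} (C : Set (ι → F2)) (a : Motif ι) : Prop :=
  variety a ⊆ C

/-- The set of maximal motifs of a code `C`. -/
def maxMot {ι : Type*} (C : Set (ι → F2)) : Set (Motif ι) :=
  {a | IsMotifOf C a ∧ ∀ b : Motif ι, IsMotifOf C b → MotifLE a b → a = b}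

/-- Two motifs are disjoint if at some index both are non-`*` and they differ. -/
def DisjointMotifs {ι : Type*} (a b : Motif ι) : Prop :=
  ∃ (i : ι) (x : F2), a i = some x ∧ b i = some (1 - x)

/-- Polarization of a motif of length `n`, as a motif of length `2n`
(indexed by `Fin n ⊕ Fin n`; `Sum.inl i` is coordinate `i`, `Sum.inr i` is coordinate `n+i`). -/
def polMotif {n : ℕ} (a : Motif (Fin n)) : Motif (Fin n ⊕ Fin n)
  | Sum.inl i => if a i = some 0 then some 0 else none
  | Sum.inr i => if a i = some 1 then some 0 else none

/-- The bar of a motif: `0 ↦ 1`, `1 ↦ 0`, `* ↦ *`. -/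
def barMotif {ι : Type*} (a : Motif ι) : Motif ι :=
  fun i => (a i).map (fun x => 1 - x)

/-- The polarization of a code `C ⊆ F₂ⁿ`: the union of the varieties of the
polarizations of the maximal motifs of `C`. -/
def polCode {n : ℕ} (C : Set (Fin n → F2)) : Set ((Fin n ⊕ Fin n) → F2) :=
  ⋃ a ∈ maxMot C, variety (polMotif a)

/-- The code `over-over-D-p` : the union of the varieties of `bar (pol (bar b))`
over the maximal motifs `b` of `D`. -/
def barPolBarCode {n : ℕ} (D : Set (Fin n → F2)) : Set ((Fin n ⊕ Fin n) → F2) :=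
  ⋃ b ∈ maxMot D, variety (barMotif (polMotif (barMotif b)))

/-- The formal polarization of a code `C`: the complement of `barPolBarCode` of `Cᶜ`. -/
def formalPol {n : ℕ} (C : Set (Fin n → F2)) : Set ((Fin n ⊕ Fin n) → F2) :=
  (barPolBarCode Cᶜ)ᶜ

/-- The Lagrange polynomial of a motif. -/
noncomputable def lagrange {ι : Type*} [Fintype ι] (a : Motif ι) : MvPolynomial ι F2 :=
  (∏ i ∈ Finset.univ.filter (fun i => a i = some 1), X i) *
    ∏ j ∈ Finset.univ.filter (fun j => a j = some 0), (1 - X j)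

/-- The motif (with no stars) corresponding to a word. -/
def wordMotif {ι : Type*} (w : ι → F2) : Motif ι := fun i => some (w i)

/-- The neural ideal of a code: generated by the Lagrange polynomials of the
words in the complement of the code. -/
noncomputable def neuralIdeal {ι : Type*} [Fintype ι] (C : Set (ι → F2)) :
    Ideal (MvPolynomial ι F2) :=
  Ideal.span ((fun w => lagrange (wordMotif w)) '' Cᶜ)

/-- The pseudo-monomial `∏_{i ∈ σ} X i * ∏_{j ∈ τ} (1 - X j)`. -/
noncomputable def pm {ι : Type*} (σ τ : Finset ι) : MvPolynomial ι F2 :=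
  (∏ i ∈ σ, X i) * ∏ j ∈ τ, (1 - X j)

/-- A polynomial is a pseudo-monomial if it equals `pm σ τ` for disjoint `σ τ`. -/
def IsPseudoMonomial {ι : Type*} (f : MvPolynomial ι F2) : Prop :=
  ∃ σ τ : Finset ι, Disjoint σ τ ∧ f = pm σ τ

/-- The canonical form of an ideal: the set of its minimal pseudo-monomials, i.e.
pseudo-monomials `f ∈ I` such that no pseudo-monomial `g ∈ I` of strictly smaller
degree divides `f`. -/
def CF {ι : Type*} (I : Ideal (MvPolynomial ι F2)) : Set (MvPolynomial ι F2) :=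
  {f | IsPseudoMonomial f ∧ f ∈ I ∧
    ¬ ∃ g : MvPolynomial ι F2, IsPseudoMonomial g ∧ g ∈ I ∧
      g.totalDegree < f.totalDegree ∧ g ∣ f}

/-- The polarization of the pseudo-monomial with data `(σ, τ)`:
`∏_{i ∈ σ} X i * ∏_{j ∈ τ} Y j` (here `Y j = X (Sum.inr j)`). -/
noncomputable def ppm {n : ℕ} (σ τ : Finset (Fin n)) : MvPolynomial (Fin n ⊕ Fin n) F2 :=
  (∏ i ∈ σ, X (Sum.inl i)) * ∏ j ∈ τ, X (Sum.inr j)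

/-- `g` is the polarization of the pseudo-monomial `f`. -/
def PolPM {n : ℕ} (f : MvPolynomial (Fin n) F2) (g : MvPolynomial (Fin n ⊕ Fin n) F2) : Prop :=
  ∃ σ τ : Finset (Fin n), Disjoint σ τ ∧ f = pm σ τ ∧ g = ppm σ τ

/-- The set of polarizations of the elements of a set of pseudo-monomials. -/
def polSet {n : ℕ} (S : Set (MvPolynomial (Fin n) F2)) :
    Set (MvPolynomial (Fin n ⊕ Fin n) F2) :=
  {g | ∃ f ∈ S, PolPM f g}

/-- The prime ideal of a motif: generated by `X i` for `a i = 0`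
and `1 - X j` for `a j = 1`. -/
noncomputable def pIdeal {ι : Type*} (a : Motif ι) : Ideal (MvPolynomial ι F2) :=
  Ideal.span ({f | ∃ i, a i = some 0 ∧ f = X i} ∪ {f | ∃ j, a j = some 1 ∧ f = 1 - X j})
section Aux

open Sum

lemma F2_cases (x : F2) : x = 0 ∨ x = 1 := by revert x; decide

lemma motifLE_refl {ι : Type*} (a : Motif ι) : MotifLE a a := fun _ _ h => h

lemma motifLE_trans {ι : Type*} {a b c : Motif ι} (h1 : MotifLE a b) (h2 : MotifLE b c) :
    MotifLE a c := fun i x h => h1 i x (h2 i x h)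

lemma motifLE_antisymm {ι : Type*} {a b : Motif ι} (h1 : MotifLE a b) (h2 : MotifLE b a) :
    a = b := by
  funext i
  rcases hb : b i with _ | x
  · rcases ha : a i with _ | y
    · rfl
    · exact absurd (h2 i y ha) (by rw [hb]; simp)
  · exact h1 i x hb

/-- Abbreviation for `bar (pol (bar b))`. -/
noncomputable def Mb {n : ℕ} (b : Motif (Fin n)) : Motif (Fin n ⊕ Fin n) :=
  barMotif (polMotif (barMotif b))

lemma Mb_inl {n : ℕ} (b : Motif (Fin n)) (i : Fin n) :
    Mb b (Sum.inl i) = if b i = some 1 then some 1 else none := by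
  have key : ∀ o : Option F2, Option.map (fun x : F2 => 1 - x)
      (if Option.map (fun x : F2 => 1 - x) o = some 0 then some 0 else none) =
      if o = some 1 then some 1 else none := by decide
  simp only [Mb, barMotif, polMotif]; convert key (b i) using 2; exact if_congr Iff.rfl rfl rfl

lemma Mb_inr {n : ℕ} (b : Motif (Fin n)) (i : Fin n) :
    Mb b (Sum.inr i) = if b i = some 0 then some 1 else none := by
  have key : ∀ o : Option F2, Option.map (fun x : F2 => 1 - x)
      (if Option.map (fun x : F2 => 1 - x) o = some 1 then some 0 else none) =
      if o = some 0 then some 1 else none := by decide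
  simp only [Mb, barMotif, polMotif]; convert key (b i) using 2; exact if_congr Iff.rfl rfl rfl

lemma Mb_only_ones {n : ℕ} (b : Motif (Fin n)) (k : Fin n ⊕ Fin n) (x : F2)
    (h : Mb b k = some x) : x = 1 := by
  rcases k with i | i
  · rw [Mb_inl] at h
    split_ifs at h with hb
    · exact (Option.some_inj.mp h).symm
  · rw [Mb_inr] at h
    split_ifs at h with hb
    · exact (Option.some_inj.mp h).symm

lemma mem_variety_Mb {n : ℕ} (b : Motif (Fin n)) (w : (Fin n ⊕ Fin n) → F2) :
    w ∈ variety (Mb b) ↔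
      (∀ i, b i = some 1 → w (Sum.inl i) = 1) ∧ (∀ i, b i = some 0 → w (Sum.inr i) = 1) := by
  constructor
  · intro h
    exact ⟨fun i hi => h (Sum.inl i) 1 (by rw [Mb_inl, if_pos hi]),
      fun i hi => h (Sum.inr i) 1 (by rw [Mb_inr, if_pos hi])⟩
  · rintro ⟨h1, h0⟩ k x hk
    rcases k with i | i
    · rw [Mb_inl] at hk
      split_ifs at hk with hb
      · rw [← Option.some_inj.mp hk]; exact h1 i hb
    · rw [Mb_inr] at hk
      split_ifs at hk with hb
      · rw [← Option.some_inj.mp hk]; exact h0 i hb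

lemma motifLE_Mb_iff {n : ℕ} (c : Motif (Fin n ⊕ Fin n)) (b : Motif (Fin n)) :
    MotifLE c (Mb b) ↔
      (∀ i, b i = some 1 → c (Sum.inl i) = some 1) ∧
      (∀ i, b i = some 0 → c (Sum.inr i) = some 1) := by
  constructor
  · intro h
    exact ⟨fun i hi => h (Sum.inl i) 1 (by rw [Mb_inl, if_pos hi]),
      fun i hi => h (Sum.inr i) 1 (by rw [Mb_inr, if_pos hi])⟩
  · rintro ⟨h1, h0⟩ k x hk
    rcases k with i | i
    · rw [Mb_inl] at hk
      split_ifs at hk with hb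
      · rw [← Option.some_inj.mp hk]; exact h1 i hb
    · rw [Mb_inr] at hk
      split_ifs at hk with hb
      · rw [← Option.some_inj.mp hk]; exact h0 i hb

lemma motifLE_of_Mb_le_Mb {n : ℕ} {b b' : Motif (Fin n)}
    (h : MotifLE (Mb b) (Mb b')) : MotifLE b b' := by
  rw [motifLE_Mb_iff] at h
  intro i x hx
  rcases F2_cases x with rfl | rfl
  · have := h.2 i hx
    rw [Mb_inr] at this
    split_ifs at this with hb
    · exact hb
  · have := h.1 i hx
    rw [Mb_inl] at this
    split_ifs at this with hb
    · exact hb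

lemma mem_variety_pol {n : ℕ} (a : Motif (Fin n)) (w : (Fin n ⊕ Fin n) → F2) :
    w ∈ variety (polMotif a) ↔
      (∀ i, a i = some 0 → w (Sum.inl i) = 0) ∧ (∀ i, a i = some 1 → w (Sum.inr i) = 0) := by
  constructor
  · intro h
    exact ⟨fun i hi => h (Sum.inl i) 0 (by simp [polMotif, hi]),
      fun i hi => h (Sum.inr i) 0 (by simp [polMotif, hi])⟩
  · rintro ⟨h1, h0⟩ k x hk
    rcases k with i | i
    · simp only [polMotif] at hk
      split_ifs at hk with ha
      · rw [← Option.some_inj.mp hk]; exact h1 i ha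
    · simp only [polMotif] at hk
      split_ifs at hk with ha
      · rw [← Option.some_inj.mp hk]; exact h0 i ha

lemma mem_barPolBarCode_iff {n : ℕ} (D : Set (Fin n → F2)) (w : (Fin n ⊕ Fin n) → F2) :
    w ∈ barPolBarCode D ↔ ∃ b ∈ maxMot D, w ∈ variety (Mb b) := by
  simp [barPolBarCode, Mb]

lemma barPolBarCode_mono {n : ℕ} (D : Set (Fin n → F2)) {w w' : (Fin n ⊕ Fin n) → F2}
    (hw : w ∈ barPolBarCode D) (h : ∀ k, w k = 1 → w' k = 1) : w' ∈ barPolBarCode D := by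
  rw [mem_barPolBarCode_iff] at hw ⊢
  obtain ⟨b, hb, hwb⟩ := hw
  rw [mem_variety_Mb] at hwb
  exact ⟨b, hb, (mem_variety_Mb b w').mpr
    ⟨fun i hi => h _ (hwb.1 i hi), fun i hi => h _ (hwb.2 i hi)⟩⟩

lemma maxMot_barPolBarCode_only_ones {n : ℕ} (D : Set (Fin n → F2))
    {c : Motif (Fin n ⊕ Fin n)} (hc : c ∈ maxMot (barPolBarCode D)) :
    ∀ k x, c k = some x → x = 1 := by
  classical
  intro k x hx
  rcases F2_cases x with rfl | rfl
  · exfalso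
    set c' : Motif (Fin n ⊕ Fin n) := Function.update c k none with hc'def
    have hle : MotifLE c c' := by
      intro j y hj
      by_cases hjk : j = k
      · subst hjk; rw [hc'def, Function.update_self] at hj; exact absurd hj (by simp)
      · rwa [hc'def, Function.update_of_ne hjk] at hj
    have hc' : IsMotifOf (barPolBarCode D) c' := by
      intro w hw
      have h0w : Function.update w k 0 ∈ variety c := by
        intro j y hj
        by_cases hjk : j = k
        · subst hjk
          rw [hx] at hj
          rw [Function.update_self, ← Option.some_inj.mp hj]
        · rw [Function.update_of_ne hjk]
          exact hw j y (by rwa [hc'def, Function.update_of_ne hjk])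
      have hmem := hc.1 h0w
      refine barPolBarCode_mono D hmem (fun m hm => ?_)
      by_cases hmk : m = k
      · subst hmk; rw [Function.update_self] at hm; exact absurd hm (by decide)
      · rwa [Function.update_of_ne hmk] at hm
    have heq := hc.2 c' hc' hle
    have : c k = none := by rw [heq, hc'def, Function.update_self]
    rw [hx] at this; exact absurd this (by simp)
  · rfl

/-- The minimal word of a motif whose entries are all `some 1` or `*`. -/
noncomputable def wMin {ι : Type*} [DecidableEq ι] (c : Motif ι) : ι → F2 :=
  fun k => if c k = some 1 then 1 else 0

lemma wMin_mem_variety {ι : Type*} [DecidableEq ι] {c : Motif ι}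
    (h : ∀ k x, c k = some x → x = 1) : wMin c ∈ variety c := by
  intro k x hx
  have := h k x hx
  subst this
  simp [wMin, hx]

lemma wMin_eq_one {ι : Type*} [DecidableEq ι] {c : Motif ι} {k : ι}
    (h : wMin c k = 1) : c k = some 1 := by
  by_cases hk : c k = some 1
  · exact hk
  · rw [wMin, if_neg hk] at h; exact absurd h (by decide)

lemma motifLE_Mb_of_wMin {n : ℕ} {c : Motif (Fin n ⊕ Fin n)} {b : Motif (Fin n)}
    (h : wMin c ∈ variety (Mb b)) : MotifLE c (Mb b) := by
  rw [mem_variety_Mb] at h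
  rw [motifLE_Mb_iff]
  exact ⟨fun i hi => wMin_eq_one (h.1 i hi), fun i hi => wMin_eq_one (h.2 i hi)⟩

def starCount {ι : Type*} [Fintype ι] (b : Motif ι) : ℕ :=
  (Finset.univ.filter (fun i => b i = none)).card

lemma starCount_lt {ι : Type*} [Fintype ι] {a b : Motif ι} (hab : MotifLE a b)
    (hne : a ≠ b) : starCount a < starCount b := by
  unfold starCount
  apply Finset.card_lt_card
  have hsubset : Finset.univ.filter (fun i => a i = none) ⊆
      Finset.univ.filter (fun i => b i = none) := by
    intro i hi
    simp only [Finset.mem_filter, Finset.mem_univ, true_and] at hi ⊢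
    rcases hb : b i with _ | y
    · rfl
    · exact absurd (hab i y hb) (by rw [hi]; simp)
  rw [Finset.ssubset_iff_of_subset hsubset]
  have : ∃ i, a i ≠ b i := by
    by_contra hall
    push_neg at hall
    exact hne (funext hall)
  obtain ⟨i, hi⟩ := this
  have hbi : b i = none := by
    rcases hb : b i with _ | y
    · rfl
    · exact absurd (hab i y hb) (fun h => hi (h.trans hb.symm))
  refine ⟨i, by simp [hbi], ?_⟩
  simp only [Finset.mem_filter, Finset.mem_univ, true_and]
  intro ha
  exact hi (by rw [ha, hbi])

lemma exists_maxMot_ge {ι : Type*} [Fintype ι] {X : Set (ι → F2)} {m : Motif ι}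
    (hm : IsMotifOf X m) : ∃ a ∈ maxMot X, MotifLE m a := by
  have H := Set.Finite.exists_maximalFor (f := starCount (ι := ι))
    (s := {b : Motif ι | IsMotifOf X b ∧ MotifLE m b}) (Set.toFinite _)
    ⟨m, hm, motifLE_refl m⟩
  obtain ⟨a, ⟨haX, hma⟩, hmax⟩ := H
  refine ⟨a, ⟨haX, ?_⟩, hma⟩
  intro b hbX hab
  by_contra hne'
  have hlt := starCount_lt hab hne'
  have := hmax ⟨hbX, motifLE_trans hma hab⟩ (le_of_lt hlt)
  omega

lemma wordMotif_isMotifOf {ι : Type*} {C : Set (ι → F2)} {u : ι → F2} (hu : u ∈ C) :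
    IsMotifOf C (wordMotif u) := by
  intro w hw
  have : w = u := funext fun i => hw i (u i) rfl
  rwa [this]

lemma exists_conflict {n : ℕ} {C D : Set (Fin n → F2)} (hD : D = Cᶜ)
    {a b : Motif (Fin n)} (ha : IsMotifOf C a) (hb : IsMotifOf D b) :
    ∃ i, (a i = some 0 ∧ b i = some 1) ∨ (a i = some 1 ∧ b i = some 0) := by
  by_contra h
  push_neg at h
  set v : Fin n → F2 := fun i => (a i).getD ((b i).getD 0) with hv
  have hva : v ∈ variety a := by
    intro i x hx; simp [hv, hx]
  have hvb : v ∈ variety b := by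
    intro i y hy
    rcases hcase : a i with _ | x
    · simp [hv, hcase, hy]
    · have hvx : v i = x := by simp [hv, hcase]
      have hxy : x = y := by
        rcases F2_cases x with rfl | rfl <;> rcases F2_cases y with rfl | rfl
        · rfl
        · exact absurd (hy.trans (congrArg some rfl)) ((h i).1 hcase)
        · exact absurd hy (by
            have := (h i).2 hcase
            intro hcontra; exact this hcontra)
        · rfl
      rw [hvx, hxy]
  have h1 := ha hva
  have h2 := hb hvb
  rw [hD] at h2
  exact h2 h1

lemma Mb_isMotifOf_polCode_compl {n : ℕ} {C D : Set (Fin n → F2)} (hD : D = Cᶜ)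
    {b : Motif (Fin n)} (hb : b ∈ maxMot D) : IsMotifOf (polCode C)ᶜ (Mb b) := by
  intro w hw hwp
  simp only [polCode, Set.mem_iUnion, exists_prop] at hwp
  obtain ⟨a, ha, hwa⟩ := hwp
  obtain ⟨i, hi⟩ := exists_conflict hD ha.1 hb.1
  rw [mem_variety_pol] at hwa
  rw [mem_variety_Mb] at hw
  rcases hi with ⟨ha0, hb1⟩ | ⟨ha1, hb0⟩
  · have h1 := hw.1 i hb1
    have h2 := hwa.1 i ha0
    rw [h1] at h2
    exact absurd h2 (by decide)
  · have h1 := hw.2 i hb0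
    have h2 := hwa.2 i ha1
    rw [h1] at h2
    exact absurd h2 (by decide)

lemma motifLE_update_none {ι : Type*} [DecidableEq ι] (b : Motif ι) (k : ι) :
    MotifLE b (Function.update b k none) := by
  intro j y hj
  by_cases hjk : j = k
  · subst hjk; rw [Function.update_self] at hj; exact absurd hj (by simp)
  · rwa [Function.update_of_ne hjk] at hj

lemma Mb_maxMot_polCode_compl {n : ℕ} {C D : Set (Fin n → F2)} (hD : D = Cᶜ)
    {b : Motif (Fin n)} (hb : b ∈ maxMot D) : Mb b ∈ maxMot (polCode C)ᶜ := by
  classical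
  refine ⟨Mb_isMotifOf_polCode_compl hD hb, ?_⟩
  intro c hc hle
  have honly : ∀ k x, c k = some x → x = 1 := fun k x hk =>
    Mb_only_ones b k x (hle k x hk)
  refine motifLE_antisymm hle ?_
  by_contra hnle
  rw [motifLE_Mb_iff] at hnle
  obtain ⟨i₀, hbi₀, hci₀⟩ : ∃ i₀, b i₀ ≠ none ∧
      ((b i₀ = some 1 → c (Sum.inl i₀) ≠ some 1) ∧
       (b i₀ = some 0 → c (Sum.inr i₀) ≠ some 1)) := by
    rcases not_and_or.mp hnle with h | h
    · push_neg at h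
      obtain ⟨i, hi1, hi2⟩ := h
      exact ⟨i, by rw [hi1]; simp, fun _ => hi2,
        fun h0 => absurd (hi1.symm.trans h0) (by simp)⟩
    · push_neg at h
      obtain ⟨i, hi1, hi2⟩ := h
      exact ⟨i, by rw [hi1]; simp,
        fun h1 => absurd (hi1.symm.trans h1) (by simp), fun _ => hi2⟩
  set b' : Motif (Fin n) := Function.update b i₀ none with hb'def
  have hleb : MotifLE b b' := motifLE_update_none b i₀
  have hneb : b ≠ b' := fun h => hbi₀ (by rw [h, hb'def, Function.update_self])
  have hb'not : ¬ IsMotifOf D b' := fun h' => hneb (hb.2 b' h' hleb)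
  obtain ⟨u, hub', huD⟩ := Set.not_subset.mp hb'not
  have huC : u ∈ C := by rw [hD] at huD; simpa using huD
  obtain ⟨a, haM, hua⟩ := exists_maxMot_ge (wordMotif_isMotifOf huC)
  have hua' : ∀ i x, a i = some x → u i = x := by
    intro i x hx
    have := hua i x hx
    exact Option.some_inj.mp this
  have hwc : wMin c ∈ variety c := wMin_mem_variety honly
  have hwpol : wMin c ∈ variety (polMotif a) := by
    rw [mem_variety_pol]
    constructor
    · intro i ha0
      by_cases hci : c (Sum.inl i) = some 1
      · exfalso
        have hbi : b i = some 1 := by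
          have h2 := hle (Sum.inl i) 1 hci
          rw [Mb_inl] at h2
          split_ifs at h2 with h3
          · exact h3
        have hne0 : i ≠ i₀ := fun h => by subst h; exact hci₀.1 hbi hci
        have hub : u i = 1 := hub' i 1 (by rw [hb'def, Function.update_of_ne hne0]; exact hbi)
        have h4 := hua' i 0 ha0
        rw [hub] at h4; exact absurd h4 (by decide)
      · rw [wMin, if_neg hci]
    · intro i ha1
      by_cases hci : c (Sum.inr i) = some 1
      · exfalso
        have hbi : b i = some 0 := by
          have h2 := hle (Sum.inr i) 1 hci
          rw [Mb_inr] at h2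
          split_ifs at h2 with h3
          · exact h3
        have hne0 : i ≠ i₀ := fun h => by subst h; exact hci₀.2 hbi hci
        have hub : u i = 0 := hub' i 0 (by rw [hb'def, Function.update_of_ne hne0]; exact hbi)
        have h4 := hua' i 1 ha1
        rw [hub] at h4; exact absurd h4 (by decide)
      · rw [wMin, if_neg hci]
  have hmem : wMin c ∈ polCode C := by
    simp only [polCode, Set.mem_iUnion, exists_prop]
    exact ⟨a, haM, hwpol⟩
  exact hc hwc hmem

lemma Mb_maxMot_E {n : ℕ} {D : Set (Fin n → F2)} {b : Motif (Fin n)}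
    (hb : b ∈ maxMot D) : Mb b ∈ maxMot (barPolBarCode D) := by
  refine ⟨fun w hw => (mem_barPolBarCode_iff D w).mpr ⟨b, hb, hw⟩, ?_⟩
  intro c hc hle
  have honly : ∀ k x, c k = some x → x = 1 := fun k x hk =>
    Mb_only_ones b k x (hle k x hk)
  have hwc : wMin c ∈ variety c := wMin_mem_variety honly
  obtain ⟨b', hb', hwb'⟩ := (mem_barPolBarCode_iff D _).mp (hc hwc)
  have h1 : MotifLE c (Mb b') := motifLE_Mb_of_wMin hwb'
  have h2 : MotifLE b b' := motifLE_of_Mb_le_Mb (motifLE_trans hle h1)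
  have hbb : b = b' := hb.2 b' hb'.1 h2
  subst hbb
  exact motifLE_antisymm hle h1

lemma maxMot_E_sub {n : ℕ} {D : Set (Fin n → F2)} :
    maxMot (barPolBarCode D) ⊆ Mb '' maxMot D := by
  intro c hc
  have honly := maxMot_barPolBarCode_only_ones D hc
  have hwc : wMin c ∈ variety c := wMin_mem_variety honly
  obtain ⟨b, hb, hwb⟩ := (mem_barPolBarCode_iff D _).mp (hc.1 hwc)
  have h1 : MotifLE c (Mb b) := motifLE_Mb_of_wMin hwb
  have hcb : c = Mb b :=
    hc.2 (Mb b) (fun w hw => (mem_barPolBarCode_iff D w).mpr ⟨b, hb, hw⟩) h1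
  exact ⟨b, hb, hcb.symm⟩

end Aux

/-- with `D = ᶜC`,
`MaxMot(ᶜ(C^[p])) = {bar((bar b)ᵖ) : b ∈ MaxMot D} ⊆ MaxMot(ᶜ(Cᵖ))`. -/
theorem maxMot_compl_formalPol {n : ℕ} (C D : Set (Fin n → F2)) (hD : D = Cᶜ) :
    maxMot ((formalPol C)ᶜ) =
      (fun b : Motif (Fin n) => barMotif (polMotif (barMotif b))) '' maxMot D ∧
    maxMot ((formalPol C)ᶜ) ⊆ maxMot ((polCode C)ᶜ) := by
  classical
  have hE : (formalPol C)ᶜ = barPolBarCode D := by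
    rw [formalPol, compl_compl, hD]
  have himg : (fun b : Motif (Fin n) => barMotif (polMotif (barMotif b))) '' maxMot D
      = Mb '' maxMot D := rfl
  constructor
  · rw [hE, himg]
    refine Set.Subset.antisymm maxMot_E_sub ?_
    rintro _ ⟨b, hb, rfl⟩
    exact Mb_maxMot_E hb
  · rw [hE]
    intro c hc
    obtain ⟨b, hb, rfl⟩ := maxMot_E_sub hc
    exact Mb_maxMot_polCode_compl hD hb
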